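/- arXiv:2212.12951 — 2 statements merged into one kernel-verified Lean document; each statement's English description precedes it below -/
import Mathlib

section
/- Let x ∈ S² be a point with r(x) = x. Then there exists a continuous map σ : ℝP² → Z₀ such that σ([y]) = π(x,y) for every y ∈ S², σ is a topological embedding (a homeomorphism onto its image), and q̄ ∘ σ is the identity of ℝP²; that is, σ is a section of the bundle map q̄. -/
noncomputable section

/-- The unit 2-sphere `S²` in Euclidean `ℝ³`. -/
abbrev S2 : Type := Metric.sphere (0 : EuclideanSpace ℝ (Fin 3)) 1

/-- The reflection `r(y₁,y₂,y₃) = (y₁,y₂,−y₃)` of `ℝ³`. -/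
def rFun (y : EuclideanSpace ℝ (Fin 3)) : EuclideanSpace ℝ (Fin 3) :=
  WithLp.toLp 2 (fun i => if i = 2 then -y i else y i)

lemma rFun_norm (y : EuclideanSpace ℝ (Fin 3)) : ‖rFun y‖ = ‖y‖ := by
  simp only [EuclideanSpace.norm_eq]
  congr 1
  refine Finset.sum_congr rfl fun i _ => ?_
  by_cases h : i = 2 <;> simp [rFun, h]

/-- The reflection `r`, restricted to the unit sphere `S²`. -/
def sphereR (x : S2) : S2 :=
  ⟨rFun x.val, by
    rw [mem_sphere_zero_iff_norm, rFun_norm]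
    exact mem_sphere_zero_iff_norm.mp x.2⟩

/-- The map `τ : S² × S² → S² × S²`, `τ(x,y) = (r(x), −y)`. -/
def tau (p : S2 × S2) : S2 × S2 := (sphereR p.1, -p.2)

lemma rFun_rFun (y : EuclideanSpace ℝ (Fin 3)) : rFun (rFun y) = y := by
  ext i
  by_cases h : i = 2 <;> simp [rFun, h]

lemma tau_tau (p : S2 × S2) : tau (tau p) = p := by
  obtain ⟨x, y⟩ := p
  simp only [tau, neg_neg]
  exact Prod.ext (Subtype.ext (rFun_rFun x.val)) rfl

/-- The equivalence relation on `S² × S²` given by `p ∼ q ↔ (q = p or q = τ(p))`. -/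
def tauSetoid : Setoid (S2 × S2) where
  r p q := q = p ∨ q = tau p
  iseqv := by
    constructor
    · intro p; left; rfl
    · rintro p q (rfl | rfl)
      · left; rfl
      · right; exact (tau_tau p).symm
    · rintro p q r (rfl | rfl) (rfl | rfl)
      · left; rfl
      · right; rfl
      · right; rfl
      · left; exact tau_tau p

/-- The quotient space `Z₀ = (S² × S²)/∼`, with the quotient topology. -/
abbrev Z0 : Type := Quotient tauSetoid

/-- The quotient map `π : S² × S² → Z₀`. -/
def pi0 : S2 × S2 → Z0 := Quotient.mk tauSetoid

/-- The real projective plane `ℝP²`, the projectivization of `ℝ³`. -/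
abbrev RP2 : Type := Projectivization ℝ (EuclideanSpace ℝ (Fin 3))

/-- `ℝP²` carries the quotient topology from the subspace of nonzero vectors of `ℝ³`. -/
instance : TopologicalSpace RP2 :=
  inferInstanceAs (TopologicalSpace
    (Quotient (projectivizationSetoid ℝ (EuclideanSpace ℝ (Fin 3)))))

lemma sphere_ne_zero (y : S2) : (y : EuclideanSpace ℝ (Fin 3)) ≠ 0 := by
  intro h0
  have h := mem_sphere_zero_iff_norm.mp y.2
  rw [h0] at h
  simp at h

/-- The map `q : S² × S² → ℝP²`, `q(x,y) = [y]`. -/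
def qFun (p : S2 × S2) : RP2 := Projectivization.mk ℝ p.2.val (sphere_ne_zero p.2)

lemma qFun_tau (p : S2 × S2) : qFun (tau p) = qFun p := by
  refine (Projectivization.mk_eq_mk_iff ℝ _ _ _ _).mpr ⟨-1, ?_⟩
  show (-1 : ℝˣ) • (p.2.val) = ((tau p).2).val
  simp [tau, Units.smul_def]

/-- The descended map `q̄ : Z₀ → ℝP²`, satisfying `q̄ ∘ π = q`. -/
def qbar : Z0 → RP2 :=
  Quotient.lift qFun (by
    rintro a b (rfl | rfl)
    · rfl
    · exact (qFun_tau a).symm)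

-- auxiliary

/-- normalize a nonzero vector onto the sphere -/
def unitize (v : { v : EuclideanSpace ℝ (Fin 3) // v ≠ 0 }) : S2 :=
  ⟨‖v.val‖⁻¹ • v.val, by
    rw [mem_sphere_zero_iff_norm, norm_smul, norm_inv, norm_norm,
      inv_mul_cancel₀ (norm_ne_zero_iff.mpr v.2)]⟩

lemma continuous_unitize : Continuous unitize := by
  have h : Continuous (fun v : { v : EuclideanSpace ℝ (Fin 3) // v ≠ 0 } =>
      ‖v.val‖⁻¹ • v.val) := by
    apply Continuous.fun_smul
    · exact (continuous_subtype_val.norm).inv₀ fun v => norm_ne_zero_iff.mpr v.2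
    · exact continuous_subtype_val
  exact h.subtype_mk _

lemma pi0_neg (x : S2) (hx : rFun x.val = x.val) (y : S2) :
    pi0 (x, -y) = pi0 (x, y) := by
  apply Quotient.sound
  right
  refine Prod.ext (Subtype.ext hx.symm) ?_
  show y = - - y
  rw [neg_neg]

lemma continuous_qbar : Continuous qbar := by
  apply Continuous.quotient_lift
  have : Continuous (fun p : S2 × S2 =>
      (⟨p.2.val, sphere_ne_zero p.2⟩ : { v : EuclideanSpace ℝ (Fin 3) // v ≠ 0 })) :=
    (continuous_subtype_val.comp continuous_snd).subtype_mk _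
  exact continuous_quotient_mk'.comp this

/-- every fixed point `x` of `r` on `S²` determines a continuous section
`σ : ℝP² → Z₀` of `q̄` with `σ([y]) = π(x,y)`, which is a topological embedding. -/
theorem section_from_fixed_point (x : S2) (hx : rFun x.val = x.val) :
    ∃ σ : RP2 → Z0,
      Continuous σ ∧
      (∀ y : S2, σ (Projectivization.mk ℝ y.val (sphere_ne_zero y)) = pi0 (x, y)) ∧
      Topology.IsEmbedding σ ∧
      qbar ∘ σ = id := by
  have hwd : ∀ (a b : { v : EuclideanSpace ℝ (Fin 3) // v ≠ 0 }),
      (projectivizationSetoid ℝ (EuclideanSpace ℝ (Fin 3))).r a b →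
      pi0 (x, unitize a) = pi0 (x, unitize b) := by
    rintro a b ⟨c, hc⟩
    have hc' : (c : ℝ) • b.val = a.val := hc
    have hcne : (c : ℝ) ≠ 0 := c.ne_zero
    have hnorm : ‖a.val‖ = |(c : ℝ)| * ‖b.val‖ := by
      rw [← hc', norm_smul, Real.norm_eq_abs]
    have hbne : ‖b.val‖ ≠ 0 := norm_ne_zero_iff.mpr b.2
    have key : ‖a.val‖⁻¹ • a.val = ((c:ℝ) / |(c:ℝ)|) • (‖b.val‖⁻¹ • b.val) := by
      rw [hnorm, ← hc', smul_smul, smul_smul]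
      congr 1
      field_simp
    rcases abs_choice (c : ℝ) with h | h
    · have : ‖a.val‖⁻¹ • a.val = ‖b.val‖⁻¹ • b.val := by
        rw [key, h, div_self hcne, one_smul]
      have : unitize a = unitize b := Subtype.ext this
      rw [this]
    · have : ‖a.val‖⁻¹ • a.val = -(‖b.val‖⁻¹ • b.val) := by
        rw [key, h]
        rw [div_neg, div_self hcne]
        simp
      have hu : unitize a = -(unitize b) := Subtype.ext this
      rw [hu, pi0_neg x hx]
  refine ⟨Quotient.lift (fun v => pi0 (x, unitize v)) hwd, ?_, ?_, ?_, ?_⟩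
  · exact Continuous.quotient_lift (continuous_quotient_mk'.comp
      ((continuous_const.prodMk continuous_unitize))) _
  · intro y
    have h1 : unitize ⟨y.val, sphere_ne_zero y⟩ = y := by
      apply Subtype.ext
      show ‖y.val‖⁻¹ • y.val = y.val
      rw [mem_sphere_zero_iff_norm.mp y.2]
      simp
    show pi0 (x, unitize ⟨y.val, sphere_ne_zero y⟩) = pi0 (x, y)
    rw [h1]
  · -- embedding: left inverse qbar
    apply Function.LeftInverse.isEmbedding (f := qbar)
    · intro p
      induction p using Quotient.ind with
      | _ v =>
        show qFun (x, unitize v) = Projectivization.mk ℝ v.val v.2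
        refine (Projectivization.mk_eq_mk_iff ℝ _ _ _ _).mpr
          ⟨Units.mk0 ‖v.val‖⁻¹ (inv_ne_zero (norm_ne_zero_iff.mpr v.2)), rfl⟩
    · exact continuous_qbar
    · exact Continuous.quotient_lift (continuous_quotient_mk'.comp
        ((continuous_const.prodMk continuous_unitize))) _
  · funext p
    induction p using Quotient.ind with
    | _ v =>
      show qFun (x, unitize v) = Projectivization.mk ℝ v.val v.2
      refine (Projectivization.mk_eq_mk_iff ℝ _ _ _ _).mpr
        ⟨Units.mk0 ‖v.val‖⁻¹ (inv_ne_zero (norm_ne_zero_iff.mpr v.2)), rfl⟩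
end
end

section
/- Every point of Z₀ has an open neighborhood that is homeomorphic to an open subset of Euclidean ℝ⁴ (EuclideanSpace ℝ (Fin 4)); together with Z₀ being compact, Hausdorff, and second countable, Z₀ is a closed topological 4-manifold. -/
noncomputable section

open Module in
lemma continuous_rFun : Continuous rFun := by
  have h : Continuous fun (g : Fin 3 → ℝ) (i : Fin 3) => if i = 2 then -g i else g i := by
    refine continuous_pi fun i => ?_
    by_cases h : i = 2 <;> simp only [h, if_true, if_false]
    · exact (continuous_apply _).neg
    · exact continuous_apply i
  exact (PiLp.continuous_toLp 2 (fun _ : Fin 3 => ℝ)).comp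
    (h.comp (PiLp.continuous_ofLp 2 (fun _ : Fin 3 => ℝ)))

lemma continuous_tau : Continuous tau := by
  refine Continuous.prodMk ?_ ?_
  · exact Continuous.subtype_mk ((continuous_rFun.comp continuous_subtype_val).comp
      continuous_fst) _
  · exact Continuous.subtype_mk ((continuous_subtype_val.comp continuous_snd).neg) _

lemma tau_ne (p : S2 × S2) : tau p ≠ p := by
  intro h
  have h2 : (-p.2 : S2) = p.2 := congrArg Prod.snd h
  have h3 : -(p.2 : EuclideanSpace ℝ (Fin 3)) = p.2 := congrArg Subtype.val h2
  have hv : (p.2 : EuclideanSpace ℝ (Fin 3)) + p.2 = 0 := by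
    nth_rewrite 1 [← h3]; exact neg_add_cancel _
  have h2v : (2 : ℝ) • (p.2 : EuclideanSpace ℝ (Fin 3)) = 0 := by rw [two_smul]; exact hv
  have hz : (p.2 : EuclideanSpace ℝ (Fin 3)) = 0 :=
    (smul_eq_zero.mp h2v).resolve_left (by norm_num)
  have := mem_sphere_zero_iff_norm.mp p.2.2
  rw [hz, norm_zero] at this
  norm_num at this

lemma sphere_ne_neg (x : S2) : x ≠ -x := by
  intro h
  have h3 : (x : EuclideanSpace ℝ (Fin 3)) = -x := congrArg Subtype.val h
  have hv : (x : EuclideanSpace ℝ (Fin 3)) + x = 0 := by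
    nth_rewrite 2 [h3]; exact add_neg_cancel _
  have h2v : (2 : ℝ) • (x : EuclideanSpace ℝ (Fin 3)) = 0 := by rw [two_smul]; exact hv
  have hz : (x : EuclideanSpace ℝ (Fin 3)) = 0 :=
    (smul_eq_zero.mp h2v).resolve_left (by norm_num)
  have := mem_sphere_zero_iff_norm.mp x.2
  rw [hz, norm_zero] at this
  norm_num at this

lemma pi0_preimage_image (U : Set (S2 × S2)) :
    pi0 ⁻¹' (pi0 '' U) = U ∪ tau ⁻¹' U := by
  ext p
  simp only [Set.mem_preimage, Set.mem_image, Set.mem_union]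
  constructor
  · rintro ⟨u, hu, h⟩
    rcases (Quotient.exact h : tauSetoid.r u p) with rfl | rfl
    · exact Or.inl hu
    · right
      show tau (tau u) ∈ U
      rw [tau_tau]; exact hu
  · rintro (h | h)
    · exact ⟨p, h, rfl⟩
    · exact ⟨tau p, h, Quotient.sound (Or.inr (tau_tau p).symm)⟩

lemma isOpenMap_pi0 : IsOpenMap pi0 := by
  letI : Setoid (S2 × S2) := tauSetoid
  intro U hU
  rw [← isQuotientMap_quotient_mk'.isOpen_preimage]
  have h : Quotient.mk' ⁻¹' (pi0 '' U) = U ∪ tau ⁻¹' U := pi0_preimage_image U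
  rw [h]
  exact hU.union (hU.preimage continuous_tau)

open Module in
lemma exists_g :
    Nonempty ((EuclideanSpace ℝ (Fin 2) × EuclideanSpace ℝ (Fin 2)) ≃ₜ
      EuclideanSpace ℝ (Fin 4)) := by
  have h : finrank ℝ (EuclideanSpace ℝ (Fin 2) × EuclideanSpace ℝ (Fin 2)) =
      finrank ℝ (EuclideanSpace ℝ (Fin 4)) := by
    simp [Module.finrank_prod, finrank_euclideanSpace_fin]
  obtain ⟨e⟩ := FiniteDimensional.nonempty_linearEquiv_of_finrank_eq h
  exact ⟨e.toContinuousLinearEquiv.toHomeomorph⟩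

/-- every point of `Z₀` has an open neighborhood homeomorphic to an open
subset of Euclidean `ℝ⁴`; together with `Z₀` being compact, Hausdorff, and second
countable, `Z₀` is a closed topological 4-manifold. -/
theorem Z0_is_closed_topological_four_manifold :
    (∀ z : Z0, ∃ U : Set Z0, z ∈ U ∧ IsOpen U ∧
        ∃ V : Set (EuclideanSpace ℝ (Fin 4)), IsOpen V ∧ Nonempty (↥U ≃ₜ ↥V)) ∧
    CompactSpace Z0 ∧ T2Space Z0 ∧ SecondCountableTopology Z0 := by
  haveI : Fact (Module.finrank ℝ (EuclideanSpace ℝ (Fin 3)) = 2 + 1) :=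
    ⟨finrank_euclideanSpace_fin⟩
  refine ⟨?_, ?_, ?_, ?_⟩
  · intro z
    obtain ⟨p, rfl⟩ := Quotient.exists_rep z
    set c := (stereographic' 2 (-p.1)).prod (stereographic' 2 (-p.2)) with hc
    have hpc : p ∈ c.source := by
      rw [hc, OpenPartialHomeomorph.prod_source, stereographic'_source, stereographic'_source]
      exact ⟨sphere_ne_neg p.1, sphere_ne_neg p.2⟩
    obtain ⟨A, B, hA, hB, hpA, htB, hAB⟩ := t2_separation (Ne.symm (tau_ne p))
    set W := c.source ∩ A ∩ tau ⁻¹' B with hWdef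
    have hW : IsOpen W := ((c.open_source.inter hA).inter (hB.preimage continuous_tau))
    have hpW : p ∈ W := ⟨⟨hpc, hpA⟩, htB⟩
    have hWsub : W ⊆ c.source := fun a ha => ha.1.1
    have hWdisj : ∀ a ∈ W, tau a ∉ W := by
      intro a ha hta
      exact Set.disjoint_left.mp hAB hta.1.2 ha.2
    set e : ↥W → Z0 := fun w => pi0 w.1 with he
    have he_cont : Continuous e := continuous_quotient_mk'.comp continuous_subtype_val
    have he_inj : Function.Injective e := by
      rintro ⟨a, ha⟩ ⟨b, hb⟩ h
      rcases (Quotient.exact h : tauSetoid.r a b) with rfl | rfl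
      · rfl
      · exact absurd hb (hWdisj a ha)
    have he_open : IsOpenMap e := isOpenMap_pi0.comp hW.isOpenMap_subtype_val
    have hemb := Topology.IsOpenEmbedding.of_continuous_injective_isOpenMap he_cont he_inj he_open
    have h1 : ↥W ≃ₜ ↥(Set.range e) := hemb.toIsEmbedding.toHomeomorph
    set c' := c.restrOpen W hW with hc'
    have h2 : ↥W ≃ₜ ↥c'.source := Homeomorph.setCongr (by
      rw [hc', OpenPartialHomeomorph.restrOpen_source]
      exact (Set.inter_eq_right.mpr hWsub).symm)
    have h3 : ↥c'.source ≃ₜ ↥c'.target := c'.toHomeomorphSourceTarget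
    obtain ⟨g⟩ := exists_g
    have h4 := g.image c'.target
    refine ⟨Set.range e, ⟨⟨p, hpW⟩, rfl⟩, ?_, g '' c'.target,
      g.isOpenMap _ c'.open_target, ⟨h1.symm.trans (h2.trans (h3.trans h4))⟩⟩
    rw [← Set.image_univ]
    exact he_open _ isOpen_univ
  · exact inferInstance
  · constructor
    intro a b hne
    obtain ⟨p, rfl⟩ := Quotient.exists_rep a
    obtain ⟨q, rfl⟩ := Quotient.exists_rep b
    have h1 : p ≠ q := by rintro rfl; exact hne rfl
    have h2 : p ≠ tau q := by
      rintro rfl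
      exact hne (Quotient.sound (Or.inr rfl)).symm
    obtain ⟨A, B, hA, hB, hpA, hqB, hAB⟩ := t2_separation h1
    obtain ⟨C, D, hC, hD, hpC, hqD, hCD⟩ := t2_separation h2
    refine ⟨pi0 '' (A ∩ C), pi0 '' (B ∩ tau ⁻¹' D),
      isOpenMap_pi0 _ (hA.inter hC), isOpenMap_pi0 _ (hB.inter (hD.preimage continuous_tau)),
      ⟨p, ⟨hpA, hpC⟩, rfl⟩, ⟨q, ⟨hqB, by rw [Set.mem_preimage]; exact hqD⟩, rfl⟩, ?_⟩
    rw [Set.disjoint_left]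
    rintro z ⟨u, ⟨huA, huC⟩, rfl⟩ ⟨v, ⟨hvB, hvD⟩, h⟩
    rcases (Quotient.exact h : tauSetoid.r v u) with rfl | rfl
    · exact Set.disjoint_left.mp hAB huA hvB
    · exact Set.disjoint_left.mp hCD huC hvD
  · letI : Setoid (S2 × S2) := tauSetoid
    exact TopologicalSpace.Quotient.secondCountableTopology isOpenMap_pi0
end
end
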